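/- Let n ≥ 1 be an integer, s ∈ (0,1), and Σ ⊆ ℝ^{n+1} a set with locally finite ℋⁿ-measure. Assume that ℋⁿ(Σ ∩ B_ρ(x₀)) ≥ c⋆ ρⁿ for all x₀ ∈ Σ and all ρ > 0, for some constant c⋆ > 0. Then there exists a constant C > 0 depending only on n, s, and c⋆, such that ℋⁿ(A)^{(n−s)/n} ≤ C · Per_{Σ,s}(A) for every ℋⁿ-measurable set A ⊆ Σ with ℋⁿ(A) < ∞, where Per_{Σ,s}(A) = ∫_A ∫_{Σ∖A} |x−y|^{−(n+s)} dℋⁿ(x) dℋⁿ(y) is the s-perimeter of A on Σ. -/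

import Mathlib

open MeasureTheory Metric Set
open scoped ENNReal NNReal

noncomputable section

/-- The `s`-perimeter of `A` on `S`:
`Per_{S,s}(A) = ∫_A ∫_{S∖A} |x-y|^{-(n+s)} dℋⁿ(x) dℋⁿ(y)`. -/
def fracPerimeterOn (n : ℕ) (s : ℝ) (S A : Set (EuclideanSpace ℝ (Fin (n + 1)))) : ℝ≥0∞ :=
  ∫⁻ x in A, ∫⁻ y in S \ A,
    ENNReal.ofReal (‖x - y‖ ^ (-((n : ℝ) + s))) ∂μH[(n : ℝ)] ∂μH[(n : ℝ)]

/-- Fractional isoperimetric inequality on sets satisfying a global density lower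
bound (Corollary 5.6). -/
theorem fractional_isoperimetric (n : ℕ) (hn : 1 ≤ n) (s : ℝ) (hs : s ∈ Ioo (0 : ℝ) 1)
    (cstar : ℝ) (hcstar : 0 < cstar) :
    ∃ C : ℝ, 0 < C ∧
      ∀ S : Set (EuclideanSpace ℝ (Fin (n + 1))),
        (∀ x : EuclideanSpace ℝ (Fin (n + 1)), ∃ ε > 0, μH[(n : ℝ)] (S ∩ ball x ε) ≠ ⊤) →
        (∀ x₀ ∈ S, ∀ ρ : ℝ, 0 < ρ →
          ENNReal.ofReal (cstar * ρ ^ n) ≤ μH[(n : ℝ)] (S ∩ ball x₀ ρ)) →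
        ∀ A : Set (EuclideanSpace ℝ (Fin (n + 1))),
          A ⊆ S → MeasurableSet A → μH[(n : ℝ)] A ≠ ⊤ →
          (μH[(n : ℝ)] A) ^ (((n : ℝ) - s) / n)
            ≤ ENNReal.ofReal C * fracPerimeterOn n s S A := by
  obtain ⟨hs0, hs1⟩ := hs
  have hn0 : (0:ℝ) < n := by exact_mod_cast hn
  have hn1 : (1:ℝ) ≤ n := by exact_mod_cast hn
  refine ⟨(2 / cstar) ^ (((n:ℝ) + s) / n), by positivity, ?_⟩
  intro S _hloc hdens A hAS hAmeas hAfin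
  set μ : Measure (EuclideanSpace ℝ (Fin (n + 1))) := μH[(n : ℝ)] with hμ
  by_cases hA0 : μ A = 0
  · rw [hA0, ENNReal.zero_rpow_of_pos (div_pos (by linarith) hn0)]
    exact zero_le
  -- set up the radius
  set m : ℝ := (μ A).toReal with hm
  have hm0 : 0 < m := ENNReal.toReal_pos hA0 hAfin
  set ρ : ℝ := (2 * m / cstar) ^ ((1:ℝ) / n) with hρdef
  have hρ0 : 0 < ρ := Real.rpow_pos_of_pos (by positivity) _
  have hρn : ρ ^ n = 2 * m / cstar := by
    rw [hρdef, ← Real.rpow_natCast ((2 * m / cstar) ^ ((1:ℝ)/n)) n,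
      ← Real.rpow_mul (by positivity), one_div,
      inv_mul_cancel₀ (ne_of_gt hn0), Real.rpow_one]
  have hμA : μ A = ENNReal.ofReal m := (ENNReal.ofReal_toReal hAfin).symm
  set c : ℝ≥0∞ := ENNReal.ofReal (ρ ^ (-((n:ℝ) + s))) with hc
  -- key pointwise bound on the inner integral
  have key : ∀ x ∈ A, μ A * c
      ≤ ∫⁻ y in S \ A, ENNReal.ofReal (‖x - y‖ ^ (-((n : ℝ) + s))) ∂μ := by
    intro x hx
    -- mass of S \ A in the ball
    have hball : μ A ≤ μ ((S \ A) ∩ ball x ρ) := by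
      have hdx := hdens x (hAS hx) ρ hρ0
      have h2 : 2 * μ A ≤ μ (S ∩ ball x ρ) := by
        have hcρ : cstar * ρ ^ n = 2 * m := by
          rw [hρn]; field_simp
        rw [hcρ] at hdx
        calc 2 * μ A = ENNReal.ofReal (2 * m) := by
              rw [hμA, ENNReal.ofReal_mul (by norm_num), ENNReal.ofReal_ofNat]
          _ ≤ μ (S ∩ ball x ρ) := hdx
      have hsub : μ (S ∩ ball x ρ) ≤ μ ((S \ A) ∩ ball x ρ) + μ A := by
        refine le_trans (measure_mono ?_) (measure_union_le _ _)
        rintro y ⟨hyS, hyB⟩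
        by_cases hyA : y ∈ A
        · exact Or.inr hyA
        · exact Or.inl ⟨⟨hyS, hyA⟩, hyB⟩
      have h3 := le_trans h2 hsub
      rw [two_mul] at h3
      exact (ENNReal.add_le_add_iff_right hAfin).mp h3
    -- the indicator comparison (valid everywhere)
    set t : Set (EuclideanSpace ℝ (Fin (n + 1))) := ball x ρ \ {x} with ht
    have htmeas : MeasurableSet t := measurableSet_ball.diff (measurableSet_singleton x)
    have hpt : ∀ y, t.indicator (fun _ => c) y
        ≤ ENNReal.ofReal (‖x - y‖ ^ (-((n : ℝ) + s))) := by
      intro y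
      by_cases hy : y ∈ t
      · rw [indicator_of_mem hy]
        obtain ⟨hyB, hyx⟩ := hy
        refine ENNReal.ofReal_le_ofReal ?_
        have hxy : 0 < ‖x - y‖ := by
          rw [norm_pos_iff, sub_ne_zero]
          exact fun h => hyx (by simp [h.symm])
        have hlt : ‖x - y‖ ≤ ρ := by
          rw [mem_ball, dist_comm, dist_eq_norm] at hyB
          exact hyB.le
        exact Real.rpow_le_rpow_of_nonpos hxy hlt (neg_nonpos.mpr (by positivity))
      · rw [indicator_of_notMem hy]; exact zero_le
    have hteq : t ∩ (S \ A) = (S \ A) ∩ ball x ρ := by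
      ext y
      constructor
      · rintro ⟨⟨hyB, _⟩, hySA⟩; exact ⟨hySA, hyB⟩
      · rintro ⟨hySA, hyB⟩
        refine ⟨⟨hyB, ?_⟩, hySA⟩
        intro h
        rw [mem_singleton_iff] at h
        exact hySA.2 (h ▸ hx)
    calc μ A * c ≤ μ ((S \ A) ∩ ball x ρ) * c := mul_le_mul_left hball _
      _ = c * μ (t ∩ (S \ A)) := by rw [hteq]; ring
      _ = ∫⁻ y in S \ A, t.indicator (fun _ => c) y ∂μ := by
          rw [lintegral_indicator htmeas, setLIntegral_const,
            Measure.restrict_apply htmeas]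
      _ ≤ ∫⁻ y in S \ A, ENNReal.ofReal (‖x - y‖ ^ (-((n : ℝ) + s))) ∂μ :=
          lintegral_mono hpt
  -- integrate the bound over A
  have hPer : μ A * c * μ A ≤ fracPerimeterOn n s S A := by
    calc μ A * c * μ A
        = ∫⁻ _ in A, μ A * c ∂μ := by rw [setLIntegral_const]
      _ ≤ fracPerimeterOn n s S A := setLIntegral_mono' hAmeas key
  refine le_trans ?_ (mul_le_mul_right hPer _)
  -- final arithmetic
  have hr0 : 0 < ρ ^ (-((n:ℝ) + s)) := Real.rpow_pos_of_pos hρ0 _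
  have hC0 : (0:ℝ) < (2 / cstar) ^ (((n:ℝ) + s) / n) := by positivity
  rw [hμA, hc, ENNReal.ofReal_rpow_of_pos hm0, ← ENNReal.ofReal_mul hm0.le,
    ← ENNReal.ofReal_mul (by positivity), ← ENNReal.ofReal_mul hC0.le]
  refine ENNReal.ofReal_le_ofReal (le_of_eq ?_)
  set p : ℝ := ((n:ℝ) + s) / n with hp
  have hρval : ρ ^ (-((n:ℝ) + s)) = (2 / cstar) ^ (-p) * m ^ (-p) := by
    have h2m : 2 * m / cstar = (2 / cstar) * m := by ring
    have he : 1 / (n:ℝ) * -((n:ℝ) + s) = -p := by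
      rw [hp]; field_simp
    rw [hρdef, ← Real.rpow_mul (by positivity), h2m,
      Real.mul_rpow (by positivity) hm0.le, he]
  rw [hρval]
  have e1 : (2 / cstar) ^ p * (2 / cstar) ^ (-p) = 1 := by
    rw [← Real.rpow_add (by positivity)]; simp
  have e2 : m * m ^ (-p) * m = m ^ (2 - p) := by
    rw [show (2:ℝ) - p = 1 + -p + 1 by ring, Real.rpow_add hm0, Real.rpow_add hm0,
      Real.rpow_one]
  calc m ^ (((n:ℝ) - s) / n) = m ^ (2 - p) := by
        congr 1
        rw [hp]; field_simp; ring
    _ = ((2 / cstar) ^ p * (2 / cstar) ^ (-p)) * (m * m ^ (-p) * m) := by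
        rw [e1, e2, one_mul]
    _ = (2 / cstar) ^ p * (m * ((2 / cstar) ^ (-p) * m ^ (-p)) * m) := by ring
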